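/- If σ : (0,1] → [0,∞) is nondecreasing, then ∫₀^τ (1/r) ∫₀^r (σ(s))²/s ds dr ≤ (∫₀^τ σ(s)/s ds)² for all τ ∈ (0,1]. In particular, if σ is Dini then the left-hand side is finite. -/

import Mathlib

open MeasureTheory Set

/-- For a nondecreasing nonnegative `σ` on `(0,1]` one has
`∫₀^τ (1/r) ∫₀^r σ(s)²/s ds dr ≤ (∫₀^τ σ(s)/s ds)²` for `τ ∈ (0,1]`; in particular,
if `σ` is Dini then the left-hand side is finite. -/
theorem double_integral_sigma_sq_le (σ : ℝ → ℝ)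
    (hmono : MonotoneOn σ (Ioc (0:ℝ) 1))
    (hnn : ∀ s ∈ Ioc (0:ℝ) 1, 0 ≤ σ s) :
    ∀ τ ∈ Ioc (0:ℝ) 1,
      (∫⁻ r in Ioc (0:ℝ) τ, ENNReal.ofReal (1 / r) *
          ∫⁻ s in Ioc (0:ℝ) r, ENNReal.ofReal ((σ s) ^ 2 / s)) ≤
        (∫⁻ s in Ioc (0:ℝ) τ, ENNReal.ofReal (σ s / s)) ^ 2 ∧
      ((∫⁻ s in Ioc (0:ℝ) 1, ENNReal.ofReal (σ s / s)) < ⊤ →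
        (∫⁻ r in Ioc (0:ℝ) τ, ENNReal.ofReal (1 / r) *
          ∫⁻ s in Ioc (0:ℝ) r, ENNReal.ofReal ((σ s) ^ 2 / s)) < ⊤) := by
  intro τ hτ
  set I := ∫⁻ s in Ioc (0:ℝ) τ, ENNReal.ofReal (σ s / s) with hI
  have key : (∫⁻ r in Ioc (0:ℝ) τ, ENNReal.ofReal (1 / r) *
      ∫⁻ s in Ioc (0:ℝ) r, ENNReal.ofReal ((σ s) ^ 2 / s)) ≤ I ^ 2 := by
    have step1 : (∫⁻ r in Ioc (0:ℝ) τ, ENNReal.ofReal (1 / r) *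
        ∫⁻ s in Ioc (0:ℝ) r, ENNReal.ofReal ((σ s) ^ 2 / s)) ≤
        ∫⁻ r in Ioc (0:ℝ) τ, ENNReal.ofReal (σ r / r) * I := by
      apply lintegral_mono_ae
      filter_upwards [ae_restrict_mem measurableSet_Ioc] with r hr
      have hr1 : r ∈ Ioc (0:ℝ) 1 := ⟨hr.1, hr.2.trans hτ.2⟩
      have hσr : 0 ≤ σ r := hnn r hr1
      have inner : (∫⁻ s in Ioc (0:ℝ) r, ENNReal.ofReal ((σ s) ^ 2 / s)) ≤
          ENNReal.ofReal (σ r) * I := by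
        calc (∫⁻ s in Ioc (0:ℝ) r, ENNReal.ofReal ((σ s) ^ 2 / s))
            ≤ ∫⁻ s in Ioc (0:ℝ) r, ENNReal.ofReal (σ r) * ENNReal.ofReal (σ s / s) := by
              apply lintegral_mono_ae
              filter_upwards [ae_restrict_mem measurableSet_Ioc] with s hs
              have hs1 : s ∈ Ioc (0:ℝ) 1 := ⟨hs.1, hs.2.trans hr1.2⟩
              have hσs : 0 ≤ σ s := hnn s hs1
              rw [← ENNReal.ofReal_mul hσr]
              apply ENNReal.ofReal_le_ofReal
              have hle : σ s ≤ σ r := hmono hs1 hr1 hs.2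
              have hspos : 0 < s := hs.1
              rw [sq, mul_div_assoc]
              exact mul_le_mul_of_nonneg_right hle (div_nonneg hσs hspos.le)
          _ = ENNReal.ofReal (σ r) * ∫⁻ s in Ioc (0:ℝ) r, ENNReal.ofReal (σ s / s) :=
              lintegral_const_mul' _ _ ENNReal.ofReal_ne_top
          _ ≤ ENNReal.ofReal (σ r) * I :=
              mul_le_mul_right (lintegral_mono_set (Ioc_subset_Ioc_right hr.2)) _
      calc ENNReal.ofReal (1 / r) * ∫⁻ s in Ioc (0:ℝ) r, ENNReal.ofReal ((σ s) ^ 2 / s)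
          ≤ ENNReal.ofReal (1 / r) * (ENNReal.ofReal (σ r) * I) :=
            mul_le_mul_right inner _
        _ = ENNReal.ofReal (σ r / r) * I := by
            rw [← mul_assoc, ← ENNReal.ofReal_mul (one_div_nonneg.mpr hr.1.le)]
            congr 2
            field_simp
    rcases eq_top_or_lt_top I with hItop | hIlt
    · rw [hItop, ENNReal.top_pow (by norm_num)]
      exact le_top
    · calc _ ≤ ∫⁻ r in Ioc (0:ℝ) τ, ENNReal.ofReal (σ r / r) * I := step1
        _ = I * I := by rw [lintegral_mul_const' _ _ hIlt.ne]
        _ = I ^ 2 := (sq I).symm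
  refine ⟨key, fun hfin => ?_⟩
  have hIJ : I ≤ ∫⁻ s in Ioc (0:ℝ) 1, ENNReal.ofReal (σ s / s) :=
    lintegral_mono_set (Ioc_subset_Ioc_right hτ.2)
  exact key.trans_lt (ENNReal.pow_lt_top (hIJ.trans_lt hfin))
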